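/- Let n(t) := (cos t, sin t, 0) and fix κ² > 0. Suppose u : ℝ → ℝ³ is C², 2π-periodic, satisfies (1/2π) ∫_{−π}^{π} |u(t)|² dt = 1, and solves the Euler–Lagrange equation −u''(t) + κ² ( u(t) − (u(t)·n(t)) n(t) ) = λ u(t) for all t, for some λ ∈ ℝ. Then λ = (1/2π) ∫_{−π}^{π} ( |u'(t)|² + κ² |u(t) × n(t)|² ) dt, and if moreover λ < κ², then u(t)·e₃ = 0 for all t, where e₃ = (0,0,1); i.e., u is in-plane. -/

import Mathlib

open Real Set MeasureTheory

/-- Squared Euclidean norm of a vector in `ℝ³`. -/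
noncomputable def sq3 (v : Fin 3 → ℝ) : ℝ := v 0 ^ 2 + v 1 ^ 2 + v 2 ^ 2

/-- Euclidean inner product in `ℝ³`. -/
noncomputable def dot3 (v w : Fin 3 → ℝ) : ℝ := v 0 * w 0 + v 1 * w 1 + v 2 * w 2

/-- The outward unit normal `n(t) = (cos t, sin t, 0)` to the unit circle. -/
noncomputable def nvec (t : ℝ) : Fin 3 → ℝ := ![Real.cos t, Real.sin t, 0]

lemma nvec_zero (t : ℝ) : nvec t 0 = Real.cos t := rfl
lemma nvec_one (t : ℝ) : nvec t 1 = Real.sin t := rfl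
lemma nvec_two (t : ℝ) : nvec t 2 = 0 := rfl

lemma dot3_nvec (v : Fin 3 → ℝ) (t : ℝ) :
    dot3 v (nvec t) = v 0 * Real.cos t + v 1 * Real.sin t := by
  simp [dot3, nvec_zero, nvec_one, nvec_two]

lemma sq3_cross_nvec (v : Fin 3 → ℝ) (t : ℝ) :
    sq3 (crossProduct v (nvec t)) = sq3 v - (dot3 v (nvec t)) ^ 2 := by
  simp [cross_apply, sq3, dot3, nvec]
  linear_combination (Real.sin_sq_add_cos_sq t) * (v 0 ^ 2 + v 1 ^ 2 + v 2 ^ 2)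

/-- **Critical points of the relaxed problem with small Lagrange multiplier are
in-plane**: if a `C²` `2π`-periodic `u` with `(1/2π)∫|u|² = 1` solves
`−u'' + κ²(u − (u·n)n) = λu`, then `λ` equals the normalized energy
`(1/2π)∫(|u'|² + κ²|u × n|²)`, and if `λ < κ²` then `u·e₃ ≡ 0`. -/
theorem critical_points_are_inplane
    (κ : ℝ) (hκ : 0 < κ ^ 2)
    (u : ℝ → Fin 3 → ℝ) (lam : ℝ)
    (hu : ContDiff ℝ 2 u)
    (hper : ∀ t : ℝ, u (t + 2 * π) = u t)
    (hconstr : (1 / (2 * π)) * ∫ t in (-π)..π, sq3 (u t) = 1)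
    (hEL : ∀ t : ℝ,
      -(deriv (deriv u) t) + κ ^ 2 • (u t - dot3 (u t) (nvec t) • nvec t)
        = lam • u t) :
    lam = (1 / (2 * π)) *
        ∫ t in (-π)..π,
          (sq3 (deriv u t) + κ ^ 2 * sq3 (crossProduct (u t) (nvec t))) ∧
    (lam < κ ^ 2 → ∀ t : ℝ, u t 2 = 0) := by
  have hπ : (0:ℝ) < π := Real.pi_pos
  -- regularity
  have hreg : Differentiable ℝ u ∧ Differentiable ℝ (deriv u) ∧ Continuous (deriv (deriv u)) := by
    rw [show (2 : WithTop ℕ∞) = 1 + 1 from rfl, contDiff_succ_iff_deriv] at hu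
    obtain ⟨h1, -, h2⟩ := hu
    rw [contDiff_one_iff_deriv] at h2
    exact ⟨h1, h2.1, h2.2⟩
  obtain ⟨hud, hdud, hcdd⟩ := hreg
  have hcu : ∀ i : Fin 3, Continuous fun t => u t i :=
    fun i => (continuous_apply i).comp hud.continuous
  have hcdu : ∀ i : Fin 3, Continuous fun t => deriv u t i :=
    fun i => (continuous_apply i).comp hdud.continuous
  have hcddu : ∀ i : Fin 3, Continuous fun t => deriv (deriv u) t i :=
    fun i => (continuous_apply i).comp hcdd
  have hfd : ∀ (t : ℝ) (i : Fin 3), HasDerivAt (fun s => u s i) (deriv u t i) t :=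
    fun t i => hasDerivAt_pi.mp (hud t).hasDerivAt i
  have hfd' : ∀ (t : ℝ) (i : Fin 3), HasDerivAt (fun s => deriv u s i) (deriv (deriv u) t i) t :=
    fun t i => hasDerivAt_pi.mp (hdud t).hasDerivAt i
  -- periodicity of the derivative
  have hdper : ∀ t : ℝ, deriv u (t + 2 * π) = deriv u t := by
    intro t
    calc deriv u (t + 2 * π) = deriv (fun x => u (x + 2 * π)) t :=
          (deriv_comp_add_const u (2 * π) t).symm
      _ = deriv u t := by congr 1; funext x; exact hper x
  have hbdry : u π = u (-π) ∧ deriv u π = deriv u (-π) := by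
    constructor
    · have h := hper (-π); rw [show (-π:ℝ) + 2 * π = π by ring] at h; exact h
    · have h := hdper (-π); rw [show (-π:ℝ) + 2 * π = π by ring] at h; exact h
  -- integration by parts, componentwise
  have hibp : ∀ i : Fin 3,
      ∫ t in (-π)..π, (deriv u t i * deriv u t i + u t i * deriv (deriv u) t i) = 0 := by
    intro i
    have h := intervalIntegral.integral_deriv_mul_eq_sub
      (u := fun s => u s i) (v := fun s => deriv u s i)
      (u' := fun s => deriv u s i) (v' := fun s => deriv (deriv u) s i)
      (a := -π) (b := π)
      (fun x _ => hfd x i) (fun x _ => hfd' x i)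
      ((hcdu i).intervalIntegrable _ _) ((hcddu i).intervalIntegrable _ _)
    rw [h]
    simp only [hbdry.1, hbdry.2]
    ring
  -- the EL equation dotted with u
  have hELdot : ∀ t : ℝ, dot3 (u t) (deriv (deriv u) t)
      = κ ^ 2 * (sq3 (u t) - (dot3 (u t) (nvec t)) ^ 2) - lam * sq3 (u t) := by
    intro t
    have h0 := congrFun (hEL t) 0
    have h1 := congrFun (hEL t) 1
    have h2 := congrFun (hEL t) 2
    simp only [Pi.add_apply, Pi.neg_apply, Pi.smul_apply, Pi.sub_apply, smul_eq_mul,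
      nvec_zero, nvec_one, nvec_two, dot3_nvec, mul_zero, sub_zero] at h0 h1 h2
    simp only [dot3_nvec, sq3, dot3, nvec_zero, nvec_one, nvec_two]
    linear_combination (-(u t 0)) * h0 + (-(u t 1)) * h1 + (-(u t 2)) * h2
  -- total integral of |u'|^2 + u·u''
  have hsum : ∫ t in (-π)..π, (sq3 (deriv u t) + dot3 (u t) (deriv (deriv u) t)) = 0 := by
    have hint : ∀ i : Fin 3, IntervalIntegrable
        (fun t => deriv u t i * deriv u t i + u t i * deriv (deriv u) t i)
        MeasureTheory.volume (-π) π := by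
      intro i
      exact (((hcdu i).mul (hcdu i)).add ((hcu i).mul (hcddu i))).intervalIntegrable _ _
    have hcongr : EqOn
        (fun t => sq3 (deriv u t) + dot3 (u t) (deriv (deriv u) t))
        (fun t => (deriv u t 0 * deriv u t 0 + u t 0 * deriv (deriv u) t 0)
          + ((deriv u t 1 * deriv u t 1 + u t 1 * deriv (deriv u) t 1)
          + (deriv u t 2 * deriv u t 2 + u t 2 * deriv (deriv u) t 2)))
        (uIcc (-π) π) := by
      intro t _
      simp only [sq3, dot3]; ring
    rw [intervalIntegral.integral_congr hcongr,
      intervalIntegral.integral_add (hint 0) ((hint 1).add (hint 2)),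
      intervalIntegral.integral_add (hint 1) (hint 2), hibp 0, hibp 1, hibp 2]
    ring
  -- the constraint integral
  have hIconstr : ∫ t in (-π)..π, sq3 (u t) = 2 * π := by
    have h2π : (2:ℝ) * π ≠ 0 := by positivity
    field_simp at hconstr
    linarith
  -- pointwise identity for the energy integrand
  have hpoint : EqOn
      (fun t => sq3 (deriv u t) + κ ^ 2 * sq3 (crossProduct (u t) (nvec t)))
      (fun t => (sq3 (deriv u t) + dot3 (u t) (deriv (deriv u) t)) + lam * sq3 (u t))
      (uIcc (-π) π) := by
    intro t _
    simp only
    rw [sq3_cross_nvec, hELdot]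
    ring
  have hintA : IntervalIntegrable
      (fun t => sq3 (deriv u t) + dot3 (u t) (deriv (deriv u) t)) MeasureTheory.volume (-π) π := by
    apply Continuous.intervalIntegrable
    simp only [sq3, dot3]
    exact ((((hcdu 0).pow 2).add ((hcdu 1).pow 2)).add ((hcdu 2).pow 2)).add
      ((((hcu 0).mul (hcddu 0)).add ((hcu 1).mul (hcddu 1))).add ((hcu 2).mul (hcddu 2)))
  have hintB : IntervalIntegrable (fun t => lam * sq3 (u t)) MeasureTheory.volume (-π) π := by
    apply Continuous.intervalIntegrable
    simp only [sq3]
    fun_prop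
  have hEnergy : ∫ t in (-π)..π,
      (sq3 (deriv u t) + κ ^ 2 * sq3 (crossProduct (u t) (nvec t))) = lam * (2 * π) := by
    rw [intervalIntegral.integral_congr hpoint,
      intervalIntegral.integral_add hintA hintB, hsum,
      intervalIntegral.integral_const_mul, hIconstr]
    ring
  constructor
  · rw [hEnergy]
    field_simp
  · -- the in-plane statement
    intro hlt t
    set μ : ℝ := κ ^ 2 - lam with hμdef
    have hμ : 0 < μ := by simp [hμdef]; linarith
    -- component 2 of the EL equation
    have hEL2 : ∀ s : ℝ, deriv (deriv u) s 2 = μ * u s 2 := by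
      intro s
      have h := congrFun (hEL s) 2
      simp only [Pi.add_apply, Pi.neg_apply, Pi.smul_apply, Pi.sub_apply, smul_eq_mul,
        nvec_two, mul_zero, sub_zero] at h
      simp only [hμdef]
      linarith
    have hIw : ∫ s in (-π)..π, (deriv u s 2 * deriv u s 2 + μ * (u s 2 * u s 2)) = 0 := by
      have := hibp 2
      rw [← this]
      apply intervalIntegral.integral_congr
      intro s _
      simp only
      rw [hEL2 s]
      ring
    have hint1 : IntervalIntegrable (fun s => deriv u s 2 * deriv u s 2)
        MeasureTheory.volume (-π) π := ((hcdu 2).mul (hcdu 2)).intervalIntegrable _ _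
    have hint2 : IntervalIntegrable (fun s => u s 2 * u s 2)
        MeasureTheory.volume (-π) π := ((hcu 2).mul (hcu 2)).intervalIntegrable _ _
    have hsplit : (∫ s in (-π)..π, deriv u s 2 * deriv u s 2)
        + μ * ∫ s in (-π)..π, u s 2 * u s 2 = 0 := by
      rw [← intervalIntegral.integral_const_mul,
        ← intervalIntegral.integral_add hint1 (hint2.const_mul μ)]
      exact hIw
    have hnn1 : 0 ≤ ∫ s in (-π)..π, deriv u s 2 * deriv u s 2 :=
      intervalIntegral.integral_nonneg (by linarith) (fun s _ => mul_self_nonneg _)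
    have hnn2 : 0 ≤ ∫ s in (-π)..π, u s 2 * u s 2 :=
      intervalIntegral.integral_nonneg (by linarith) (fun s _ => mul_self_nonneg _)
    have hzero : ∫ s in (-π)..π, u s 2 * u s 2 = 0 := by nlinarith
    -- conclude vanishing on (-π, π]
    have hae : (fun s => u s 2 * u s 2) =ᵐ[MeasureTheory.volume.restrict (Ioc (-π) π)] 0 := by
      rw [← intervalIntegral.integral_eq_zero_iff_of_le_of_nonneg_ae (by linarith)
        (Filter.Eventually.of_forall fun s => mul_self_nonneg _) hint2]
      exact hzero
    have hEqOn : EqOn (fun s => u s 2 * u s 2) 0 (Ioc (-π) π) :=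
      Measure.eqOn_Ioc_of_ae_eq MeasureTheory.volume hae ((hcu 2).mul (hcu 2)).continuousOn continuousOn_const
    have hw : ∀ s ∈ Ioc (-π) π, u s 2 = 0 := by
      intro s hs
      have := hEqOn hs
      simp only [Pi.zero_apply] at this
      exact mul_self_eq_zero.mp this
    -- extend by periodicity
    have hwper : Function.Periodic (fun s => u s 2) (2 * π) := fun s => congrFun (hper s) 2
    obtain ⟨y, hy, hty⟩ := hwper.exists_mem_Ioc (by positivity) t (-π)
    rw [hty]
    apply hw
    rw [show -π + 2 * π = π by ring] at hy
    exact hy
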